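/- arXiv:1904.07377 — 6 statements merged into one kernel-verified Lean document; each statement's English description precedes it below -/
import Mathlib

section
/- (Performance bound, continuous case.) If 𝕐 = ℝ^m with Lebesgue measure μ, then for every test T : ⟦Y⟧ → {p0, p1}, the Lebesgue (outer) measure of the correctness set satisfies μ(ℵ(T)) ≤ μ(⟦Y|p0⟧ Δ ⟦Y|p1⟧); in particular log μ(ℵ(T)) ≤ log μ(⟦Y|p0⟧ Δ ⟦Y|p1⟧). -/
open MeasureTheory

/-- **Performance bound (continuous case).**
If `𝕐 = ℝ^m` with Lebesgue measure `μ`, then for every test `T : ⟦Y⟧ → {p0, p1}`,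
the Lebesgue (outer) measure of the correctness set
`ℵ(T) = {y ∈ ⟦Y⟧ : ⟦H|⟦X|y⟧⟧ = {T y}}` satisfies
`μ(ℵ(T)) ≤ μ(⟦Y|p0⟧ Δ ⟦Y|p1⟧)`; in particular
`log μ(ℵ(T)) ≤ log μ(⟦Y|p0⟧ Δ ⟦Y|p1⟧)`. -/
theorem performance_bound_continuous {Ω 𝕏 ℍ : Type*} [Nonempty Ω] {m : ℕ}
    (p0 p1 : ℍ) (hp : p0 ≠ p1) (hcover : ∀ h : ℍ, h = p0 ∨ h = p1)
    (X : Ω → 𝕏) (gY : 𝕏 → (Fin m → ℝ)) (gH : 𝕏 → ℍ) (T : (Fin m → ℝ) → ℍ) :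
    volume {y ∈ Set.range (fun ω => gY (X ω)) |
          gH '' (X '' {ω | gY (X ω) = y}) = {T y}} ≤
        volume ((((fun ω => gY (X ω)) '' {ω | gH (X ω) = p0}) \
              ((fun ω => gY (X ω)) '' {ω | gH (X ω) = p1})) ∪
            (((fun ω => gY (X ω)) '' {ω | gH (X ω) = p1}) \
              ((fun ω => gY (X ω)) '' {ω | gH (X ω) = p0}))) ∧
      ENNReal.log (volume {y ∈ Set.range (fun ω => gY (X ω)) |
          gH '' (X '' {ω | gY (X ω) = y}) = {T y}}) ≤
        ENNReal.log (volume ((((fun ω => gY (X ω)) '' {ω | gH (X ω) = p0}) \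
              ((fun ω => gY (X ω)) '' {ω | gH (X ω) = p1})) ∪
            (((fun ω => gY (X ω)) '' {ω | gH (X ω) = p1}) \
              ((fun ω => gY (X ω)) '' {ω | gH (X ω) = p0})))) := by
  have hsub : {y ∈ Set.range (fun ω => gY (X ω)) |
          gH '' (X '' {ω | gY (X ω) = y}) = {T y}} ⊆
      ((((fun ω => gY (X ω)) '' {ω | gH (X ω) = p0}) \
              ((fun ω => gY (X ω)) '' {ω | gH (X ω) = p1})) ∪
            (((fun ω => gY (X ω)) '' {ω | gH (X ω) = p1}) \
              ((fun ω => gY (X ω)) '' {ω | gH (X ω) = p0}))) := by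
    rintro y ⟨⟨ω, rfl⟩, hy⟩
    -- every ω' in the fiber has gH (X ω') = T (gY (X ω))
    have hfib : ∀ ω' : Ω, gY (X ω') = gY (X ω) → gH (X ω') = T (gY (X ω)) := by
      intro ω' h
      have : gH (X ω') ∈ gH '' (X '' {ω'' | gY (X ω'') = gY (X ω)}) :=
        ⟨X ω', ⟨ω', h, rfl⟩, rfl⟩
      rw [hy] at this
      exact this
    have hω : gH (X ω) = T (gY (X ω)) := hfib ω rfl
    have hmem : ∀ q : ℍ, gY (X ω) ∈ (fun ω => gY (X ω)) '' {ω | gH (X ω) = q} →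
        q = T (gY (X ω)) := by
      rintro q ⟨ω', hq, h⟩
      rw [← hq]; exact hfib ω' h
    rcases hcover (T (gY (X ω))) with hT | hT
    · left
      refine ⟨⟨ω, by simpa [hT] using hω, rfl⟩, fun hmem1 => ?_⟩
      exact hp (by rw [hmem p1 hmem1, hT])
    · right
      refine ⟨⟨ω, by simpa [hT] using hω, rfl⟩, fun hmem0 => ?_⟩
      exact hp ((hmem p0 hmem0).trans hT)
  have h1 := measure_mono (μ := volume) hsub
  exact ⟨h1, ENNReal.log_monotone h1⟩
end

section
/- (Performance bound, discrete case.) If Ω is finite, then for every test T : ⟦Y⟧ → {p0, p1}, the cardinality of the correctness set satisfies |ℵ(T)| ≤ |⟦Y|p0⟧ Δ ⟦Y|p1⟧|; in particular log |ℵ(T)| ≤ log |⟦Y|p0⟧ Δ ⟦Y|p1⟧|. -/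
/-- **Performance bound (discrete case).**
If `Ω` is finite, then for every test `T : ⟦Y⟧ → {p0, p1}`, the cardinality of the
correctness set `ℵ(T) = {y ∈ ⟦Y⟧ : ⟦H|⟦X|y⟧⟧ = {T y}}` satisfies
`|ℵ(T)| ≤ |⟦Y|p0⟧ Δ ⟦Y|p1⟧|`; in particular
`log |ℵ(T)| ≤ log |⟦Y|p0⟧ Δ ⟦Y|p1⟧|`. -/
theorem performance_bound_discrete {Ω 𝕏 𝕐 ℍ : Type*} [Nonempty Ω] [Finite Ω]
    (p0 p1 : ℍ) (hp : p0 ≠ p1) (hcover : ∀ h : ℍ, h = p0 ∨ h = p1)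
    (X : Ω → 𝕏) (gY : 𝕏 → 𝕐) (gH : 𝕏 → ℍ) (T : 𝕐 → ℍ) :
    {y ∈ Set.range (fun ω => gY (X ω)) |
          gH '' (X '' {ω | gY (X ω) = y}) = {T y}}.ncard ≤
        ((((fun ω => gY (X ω)) '' {ω | gH (X ω) = p0}) \
              ((fun ω => gY (X ω)) '' {ω | gH (X ω) = p1})) ∪
            (((fun ω => gY (X ω)) '' {ω | gH (X ω) = p1}) \
              ((fun ω => gY (X ω)) '' {ω | gH (X ω) = p0}))).ncard ∧
      Real.log {y ∈ Set.range (fun ω => gY (X ω)) |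
          gH '' (X '' {ω | gY (X ω) = y}) = {T y}}.ncard ≤
        Real.log ((((fun ω => gY (X ω)) '' {ω | gH (X ω) = p0}) \
              ((fun ω => gY (X ω)) '' {ω | gH (X ω) = p1})) ∪
            (((fun ω => gY (X ω)) '' {ω | gH (X ω) = p1}) \
              ((fun ω => gY (X ω)) '' {ω | gH (X ω) = p0}))).ncard := by

  classical
  set f := fun ω => gY (X ω) with hf
  set A := {y ∈ Set.range f | gH '' (X '' {ω | gY (X ω) = y}) = {T y}} with hA
  set B := ((f '' {ω | gH (X ω) = p0}) \ (f '' {ω | gH (X ω) = p1})) ∪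
      ((f '' {ω | gH (X ω) = p1}) \ (f '' {ω | gH (X ω) = p0})) with hB
  have hsub : A ⊆ B := by
    rintro y ⟨⟨ω0, hω0⟩, hset⟩
    have hmem : ∀ ω, gY (X ω) = y → gH (X ω) = T y := by
      intro ω hω
      have : gH (X ω) ∈ gH '' (X '' {ω | gY (X ω) = y}) :=
        ⟨X ω, ⟨ω, hω, rfl⟩, rfl⟩
      rw [hset] at this
      exact this
    rcases hcover (T y) with h0 | h1
    · left
      constructor
      · exact ⟨ω0, by rw [Set.mem_setOf_eq, hmem ω0 hω0, h0], hω0⟩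
      · rintro ⟨ω1, hω1, hy1⟩
        have := hmem ω1 hy1
        rw [Set.mem_setOf_eq] at hω1
        rw [hω1, h0] at this
        exact hp this.symm
    · right
      constructor
      · exact ⟨ω0, by rw [Set.mem_setOf_eq, hmem ω0 hω0, h1], hω0⟩
      · rintro ⟨ω1, hω1, hy1⟩
        have := hmem ω1 hy1
        rw [Set.mem_setOf_eq] at hω1
        rw [hω1, h1] at this
        exact hp this
  have hBfin : B.Finite := by
    apply Set.Finite.union <;>
    exact Set.Finite.diff (Set.Finite.image _ (Set.toFinite _))
  have hcard : A.ncard ≤ B.ncard := Set.ncard_le_ncard hsub hBfin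
  refine ⟨hcard, ?_⟩
  rcases Nat.eq_zero_or_pos A.ncard with h0 | hpos
  · rw [h0]
    simp only [Nat.cast_zero, Real.log_zero]
    rcases Nat.eq_zero_or_pos B.ncard with hb0 | hbpos
    · rw [hb0]; simp
    · exact Real.log_nonneg (by exact_mod_cast hbpos)
  · apply Real.log_le_log (by exact_mod_cast hpos)
    exact_mod_cast hcard
end

section
/- (Achievability by consistent tests.) If a test T : ⟦Y⟧ → {p0, p1} is consistent, then its correctness set equals the full symmetric difference: ℵ(T) = ⟦Y|p0⟧ Δ ⟦Y|p1⟧. -/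
/-- **Achievability by consistent tests.**
If a test `T : ⟦Y⟧ → {p0, p1}` is consistent (for `y ∈ ⟦Y⟧`, `T y = p0` implies
`y ∈ ⟦Y|p0⟧` and `T y = p1` implies `y ∈ ⟦Y|p1⟧`), then its correctness set equals
the full symmetric difference: `ℵ(T) = ⟦Y|p0⟧ Δ ⟦Y|p1⟧`. -/
theorem consistent_correctness_eq_symmDiff {Ω 𝕏 𝕐 ℍ : Type*} [Nonempty Ω]
    (p0 p1 : ℍ) (hp : p0 ≠ p1) (hcover : ∀ h : ℍ, h = p0 ∨ h = p1)
    (X : Ω → 𝕏) (gY : 𝕏 → 𝕐) (gH : 𝕏 → ℍ) (T : 𝕐 → ℍ)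
    (hT0 : ∀ y ∈ Set.range (fun ω => gY (X ω)),
      T y = p0 → y ∈ (fun ω => gY (X ω)) '' {ω | gH (X ω) = p0})
    (hT1 : ∀ y ∈ Set.range (fun ω => gY (X ω)),
      T y = p1 → y ∈ (fun ω => gY (X ω)) '' {ω | gH (X ω) = p1}) :
    {y ∈ Set.range (fun ω => gY (X ω)) |
        gH '' (X '' {ω | gY (X ω) = y}) = {T y}} =
      (((fun ω => gY (X ω)) '' {ω | gH (X ω) = p0}) \
          ((fun ω => gY (X ω)) '' {ω | gH (X ω) = p1})) ∪
        (((fun ω => gY (X ω)) '' {ω | gH (X ω) = p1}) \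
          ((fun ω => gY (X ω)) '' {ω | gH (X ω) = p0})) := by
  ext y
  simp only [Set.mem_setOf_eq, Set.mem_union, Set.mem_diff, Set.mem_image,
    Set.mem_range]
  constructor
  · rintro ⟨⟨ω, hω⟩, hcorr⟩
    have hmem : ∀ ω', gY (X ω') = y → gH (X ω') = T y := by
      intro ω' hω'
      have : gH (X ω') ∈ gH '' (X '' {ω | gY (X ω) = y}) :=
        ⟨X ω', ⟨ω', hω', rfl⟩, rfl⟩
      rw [hcorr] at this; exact this
    rcases hcover (T y) with hT | hT
    · left
      refine ⟨hT0 y ⟨ω, hω⟩ hT, ?_⟩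
      rintro ⟨ω', hω1, hω2⟩
      have := hmem ω' hω2
      rw [hω1, hT] at this
      exact hp this.symm
    · right
      refine ⟨hT1 y ⟨ω, hω⟩ hT, ?_⟩
      rintro ⟨ω', hω1, hω2⟩
      have := hmem ω' hω2
      rw [hω1, hT] at this
      exact hp this
  · rintro (⟨⟨ω, hω1, hω2⟩, hnot⟩ | ⟨⟨ω, hω1, hω2⟩, hnot⟩)
    · have hrange : y ∈ Set.range (fun ω => gY (X ω)) := ⟨ω, hω2⟩
      have hTy : T y = p0 := by
        rcases hcover (T y) with h | h
        · exact h
        · exact absurd (hT1 y hrange h) hnot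
      refine ⟨⟨ω, hω2⟩, ?_⟩
      ext h
      simp only [Set.mem_image, Set.mem_setOf_eq, Set.mem_singleton_iff, hTy]
      constructor
      · rintro ⟨x, ⟨ω', hω', rfl⟩, rfl⟩
        rcases hcover (gH (X ω')) with h' | h'
        · exact h'
        · exact absurd ⟨ω', h', hω'⟩ hnot
      · rintro rfl
        exact ⟨X ω, ⟨ω, hω2, rfl⟩, hω1⟩
    · have hrange : y ∈ Set.range (fun ω => gY (X ω)) := ⟨ω, hω2⟩
      have hTy : T y = p1 := by
        rcases hcover (T y) with h | h
        · exact absurd (hT0 y hrange h) hnot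
        · exact h
      refine ⟨⟨ω, hω2⟩, ?_⟩
      ext h
      simp only [Set.mem_image, Set.mem_setOf_eq, Set.mem_singleton_iff, hTy]
      constructor
      · rintro ⟨x, ⟨ω', hω', rfl⟩, rfl⟩
        rcases hcover (gH (X ω')) with h' | h'
        · exact absurd ⟨ω', h', hω'⟩ hnot
        · exact h'
      · rintro rfl
        exact ⟨X ω, ⟨ω, hω2, rfl⟩, hω1⟩
end

section
/- (Optimal tests, continuous case.) Suppose 𝕐 = ℝ^m with Lebesgue measure μ and T : ⟦Y⟧ → {p0, p1} is a consistent test. Then T maximizes the performance over all tests: for every test T' : ⟦Y⟧ → {p0, p1}, μ(ℵ(T')) ≤ μ(ℵ(T)). -/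
open MeasureTheory

/-- **Optimal tests (continuous case).**
Suppose `𝕐 = ℝ^m` with Lebesgue measure `μ` and `T : ⟦Y⟧ → {p0, p1}` is a consistent
test (for `y ∈ ⟦Y⟧`, `T y = p0` implies `y ∈ ⟦Y|p0⟧` and `T y = p1` implies
`y ∈ ⟦Y|p1⟧`).  Then `T` maximizes the performance over all tests: for every test
`T' : ⟦Y⟧ → {p0, p1}`, `μ(ℵ(T')) ≤ μ(ℵ(T))`, where
`ℵ(S) = {y ∈ ⟦Y⟧ : ⟦H|⟦X|y⟧⟧ = {S y}}`. -/
theorem optimal_test_continuous {Ω 𝕏 ℍ : Type*} [Nonempty Ω] {m : ℕ}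
    (p0 p1 : ℍ) (hp : p0 ≠ p1) (hcover : ∀ h : ℍ, h = p0 ∨ h = p1)
    (X : Ω → 𝕏) (gY : 𝕏 → (Fin m → ℝ)) (gH : 𝕏 → ℍ) (T : (Fin m → ℝ) → ℍ)
    (hT0 : ∀ y ∈ Set.range (fun ω => gY (X ω)),
      T y = p0 → y ∈ (fun ω => gY (X ω)) '' {ω | gH (X ω) = p0})
    (hT1 : ∀ y ∈ Set.range (fun ω => gY (X ω)),
      T y = p1 → y ∈ (fun ω => gY (X ω)) '' {ω | gH (X ω) = p1}) :
    ∀ T' : (Fin m → ℝ) → ℍ,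
      volume {y ∈ Set.range (fun ω => gY (X ω)) |
          gH '' (X '' {ω | gY (X ω) = y}) = {T' y}} ≤
        volume {y ∈ Set.range (fun ω => gY (X ω)) |
          gH '' (X '' {ω | gY (X ω) = y}) = {T y}} := by
  intro T'
  apply measure_mono
  rintro y ⟨hyr, hy⟩
  refine ⟨hyr, ?_⟩
  -- it suffices to show T y = T' y
  have key : T y = T' y := by
    have hmem : ∃ ω, gY (X ω) = y ∧ gH (X ω) = T y := by
      rcases hcover (T y) with h0 | h1
      · rcases hT0 y hyr h0 with ⟨ω, hω, hωy⟩
        exact ⟨ω, hωy, by rw [hω, h0]⟩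
      · rcases hT1 y hyr h1 with ⟨ω, hω, hωy⟩
        exact ⟨ω, hωy, by rw [hω, h1]⟩
    rcases hmem with ⟨ω, hωy, hωH⟩
    have : gH (X ω) ∈ gH '' (X '' {ω | gY (X ω) = y}) :=
      ⟨X ω, ⟨ω, hωy, rfl⟩, rfl⟩
    rw [hy] at this
    rw [← hωH]; exact this
  rw [key]; exact hy
end

section
/- (Optimal tests, discrete case.) Suppose Ω is finite and T : ⟦Y⟧ → {p0, p1} is a consistent test. Then T maximizes the performance over all tests: for every test T' : ⟦Y⟧ → {p0, p1}, |ℵ(T')| ≤ |ℵ(T)|. -/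
/-- **Optimal tests (discrete case).**
Suppose `Ω` is finite and `T : ⟦Y⟧ → {p0, p1}` is a consistent test (for `y ∈ ⟦Y⟧`,
`T y = p0` implies `y ∈ ⟦Y|p0⟧` and `T y = p1` implies `y ∈ ⟦Y|p1⟧`).  Then `T`
maximizes the performance over all tests: for every test `T' : ⟦Y⟧ → {p0, p1}`,
`|ℵ(T')| ≤ |ℵ(T)|`, where `ℵ(S) = {y ∈ ⟦Y⟧ : ⟦H|⟦X|y⟧⟧ = {S y}}`. -/
theorem optimal_test_discrete {Ω 𝕏 𝕐 ℍ : Type*} [Nonempty Ω] [Finite Ω]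
    (p0 p1 : ℍ) (hp : p0 ≠ p1) (hcover : ∀ h : ℍ, h = p0 ∨ h = p1)
    (X : Ω → 𝕏) (gY : 𝕏 → 𝕐) (gH : 𝕏 → ℍ) (T : 𝕐 → ℍ)
    (hT0 : ∀ y ∈ Set.range (fun ω => gY (X ω)),
      T y = p0 → y ∈ (fun ω => gY (X ω)) '' {ω | gH (X ω) = p0})
    (hT1 : ∀ y ∈ Set.range (fun ω => gY (X ω)),
      T y = p1 → y ∈ (fun ω => gY (X ω)) '' {ω | gH (X ω) = p1}) :
    ∀ T' : 𝕐 → ℍ,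
      {y ∈ Set.range (fun ω => gY (X ω)) |
          gH '' (X '' {ω | gY (X ω) = y}) = {T' y}}.ncard ≤
        {y ∈ Set.range (fun ω => gY (X ω)) |
          gH '' (X '' {ω | gY (X ω) = y}) = {T y}}.ncard := by
  intro T'
  apply Set.ncard_le_ncard
  · rintro y ⟨hyr, himg⟩
    refine ⟨hyr, ?_⟩
    -- any ω with gY (X ω) = y has gH (X ω) = T' y
    have key : ∀ ω : Ω, gY (X ω) = y → gH (X ω) = T' y := by
      intro ω hω
      have : gH (X ω) ∈ gH '' (X '' {ω | gY (X ω) = y}) := ⟨X ω, ⟨ω, hω, rfl⟩, rfl⟩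
      rw [himg] at this
      exact this
    have hTT : T y = T' y := by
      rcases hcover (T y) with h0 | h1
      · obtain ⟨ω, hωH, hωY⟩ := hT0 y hyr h0
        rw [h0, ← hωH]
        exact key ω hωY
      · obtain ⟨ω, hωH, hωY⟩ := hT1 y hyr h1
        rw [h1, ← hωH]
        exact key ω hωY
    rw [hTT]
    exact himg
  · exact ((Set.finite_range _).subset (Set.sep_subset _ _))
end

section
/- For the masking policy g_Y, the intersection of the conditional output ranges is contained in the hypersurface cut out by g: ⟦Y|p0⟧ ∩ ⟦Y|p1⟧ ⊆ {y ∈ ℝ^n : y_i = g(y_{−i})}. -/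
open Set

/-- The vector of coordinates of `x` other than the `i`-th one (`x_{-i}`). -/
def removeCoord {n : ℕ} (i : Fin n) (x : Fin n → ℝ) : {j : Fin n // j ≠ i} → ℝ :=
  fun j => x j.1

/-- The masking reporting policy `g_Y`: it replaces the `i`-th coordinate of `x` by
`g(x_{-i})` whenever `g(x_{-i}) - 1/ρ ≤ x_i ≤ g(x_{-i}) + 1/ρ`, and reports `x`
unchanged otherwise. -/
noncomputable def maskPolicy {n : ℕ} (i : Fin n) (ρ : ℝ)
    (g : ({j : Fin n // j ≠ i} → ℝ) → ℝ) (x : Fin n → ℝ) : Fin n → ℝ :=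
  if g (removeCoord i x) - 1/ρ ≤ x i ∧ x i ≤ g (removeCoord i x) + 1/ρ then
    Function.update x i (g (removeCoord i x))
  else x

/-- The hypothesis map `g_H`: `g_H(x) = p0` if `x_i − g(x_{−i}) ≥ 0` and
`g_H(x) = p1` if `x_i − g(x_{−i}) < 0`. -/
noncomputable def hypMap {ℍ : Type*} (p0 p1 : ℍ) {n : ℕ} (i : Fin n)
    (g : ({j : Fin n // j ≠ i} → ℝ) → ℝ) (x : Fin n → ℝ) : ℍ :=
  if 0 ≤ x i - g (removeCoord i x) then p0 else p1

/-- **The overlap of the conditional output ranges lies on the hypersurface of `g`.**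
For the masking policy `g_Y`, with `Y = g_Y ∘ X` and `H = g_H ∘ X`,
`⟦Y|p0⟧ ∩ ⟦Y|p1⟧ ⊆ {y ∈ ℝ^n : y_i = g(y_{−i})}`. -/
theorem maskPolicy_overlap_subset_hypersurface {Ω ℍ : Type*} [Nonempty Ω]
    (p0 p1 : ℍ) (hp : p0 ≠ p1) {n : ℕ} (i : Fin n) (ρ : ℝ) (hρ : 0 < ρ)
    (g : ({j : Fin n // j ≠ i} → ℝ) → ℝ) (X : Ω → (Fin n → ℝ)) :
    ((fun ω => maskPolicy i ρ g (X ω)) '' {ω | hypMap p0 p1 i g (X ω) = p0}) ∩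
        ((fun ω => maskPolicy i ρ g (X ω)) '' {ω | hypMap p0 p1 i g (X ω) = p1}) ⊆
      {y : Fin n → ℝ | y i = g (removeCoord i y)} := by
  classical
  have key : ∀ (x : Fin n → ℝ) c, removeCoord i (Function.update x i c) = removeCoord i x := by
    intro x c; funext j
    simp [removeCoord, Function.update_of_ne j.2]
  have mask_case : ∀ x : Fin n → ℝ,
      (maskPolicy i ρ g x) i = g (removeCoord i (maskPolicy i ρ g x)) ∨
      (maskPolicy i ρ g x = x ∧
        ¬(g (removeCoord i x) - 1/ρ ≤ x i ∧ x i ≤ g (removeCoord i x) + 1/ρ)) := by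
    intro x
    by_cases h : g (removeCoord i x) - 1/ρ ≤ x i ∧ x i ≤ g (removeCoord i x) + 1/ρ
    · left
      rw [maskPolicy, if_pos h, key, Function.update_self]
    · right
      exact ⟨by rw [maskPolicy, if_neg h], h⟩
  rintro y ⟨⟨ω0, h0, hy0⟩, ω1, h1, hy1⟩
  simp only [Set.mem_setOf_eq, hypMap] at h0 h1
  have hx0 : 0 ≤ X ω0 i - g (removeCoord i (X ω0)) := by
    by_contra h; simp [h] at h0; exact hp h0.symm
  have hx1 : ¬ 0 ≤ X ω1 i - g (removeCoord i (X ω1)) := by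
    by_contra h; rw [if_pos h] at h1; exact hp h1
  rcases mask_case (X ω1) with h | ⟨heq, hnot⟩
  · simp only [Set.mem_setOf_eq]; rw [← hy1]; exact h
  · -- X ω1 unmasked, so X ω1 i < g - 1/ρ
    push_neg at hnot hx1
    have h1' : X ω1 i < g (removeCoord i (X ω1)) - 1/ρ := by
      rcases lt_or_ge (X ω1 i) (g (removeCoord i (X ω1)) - 1/ρ) with h | h
      · exact h
      · have := hnot h; linarith
    rcases mask_case (X ω0) with h | ⟨heq0, _⟩
    · simp only [Set.mem_setOf_eq]; rw [← hy0]; exact h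
    · exfalso
      have : X ω1 = X ω0 := by rw [← heq, ← heq0]; exact hy1.trans hy0.symm
      have hpos : 0 < 1/ρ := by positivity
      rw [this] at h1'
      linarith
end
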